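/- In every k-swap game with only strategic agents, k ≥ 2 nonempty types, and a connected topology, every assignment v satisfies DI(v) ≥ k; consequently, the integration price of anarchy is at most n/k. Moreover this bound is tight: for the k-swap game with x+1 agents of type T₁ and x agents of each other type (n = kx+1) on the tree with root α having k children β₁, …, β_k, each with x−1 leaf children, there is an assignment in which every agent is exposed (DI = n), while there is an equilibrium assignment with DI = k. -/

import Mathlib

open Finset

namespace SwapGame

/-- Build a simple graph from a (not necessarily symmetric) boolean relation
by symmetrizing it and removing loops. -/
def mkGraph {V : Type*} (r : V → V → Bool) : SimpleGraph V where
  Adj a b := a ≠ b ∧ (r a b ∨ r b a)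
  symm := ⟨fun a b h => ⟨Ne.symm h.1, Or.symm h.2⟩⟩
  loopless := ⟨fun a h => h.1 rfl⟩

instance mkGraph.instDecidableRel {V : Type*} [DecidableEq V] (r : V → V → Bool) :
    DecidableRel (mkGraph r).Adj :=
  fun a b => inferInstanceAs (Decidable (a ≠ b ∧ (r a b ∨ r b a)))

variable {A V K : Type*} [Fintype V] [DecidableEq A] [DecidableEq V] [DecidableEq K]

/-- The assignment obtained from `σ` by swapping the locations of agents `i` and `j`. -/
def swapA (σ : A ≃ V) (i j : A) : A ≃ V := (Equiv.swap i j).trans σ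

/-- The utility of agent `i` under assignment `σ`: the fraction of the neighbors of the
node of `i` that are occupied by agents of the same type (friends of `i`). -/
def util (G : SimpleGraph V) [DecidableRel G.Adj] (c : A → K) (σ : A ≃ V) (i : A) : ℚ :=
  (((G.neighborFinset (σ i)).filter (fun w => c (σ.symm w) = c i)).card : ℚ) /
    ((G.neighborFinset (σ i)).card : ℚ)

/-- Agents `i` and `j` both strictly increase their utility by swapping their locations. -/
def improving (G : SimpleGraph V) [DecidableRel G.Adj] (c : A → K) (σ : A ≃ V)
    (i j : A) : Prop :=
  util G c σ i < util G c (swapA σ i j) i ∧ util G c σ j < util G c (swapA σ i j) j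

/-- An assignment is an equilibrium if no pair of agents can both strictly increase
their utility by swapping positions. -/
def isEquilibrium (G : SimpleGraph V) [DecidableRel G.Adj] (c : A → K) (σ : A ≃ V) : Prop :=
  ¬ ∃ i j : A, improving G c σ i j

/-- The social welfare of an assignment: the sum of the utilities of all agents. -/
def SW [Fintype A] (G : SimpleGraph V) [DecidableRel G.Adj] (c : A → K) (σ : A ≃ V) : ℚ :=
  ∑ i : A, util G c σ i

/-- Agent `i` is exposed: at least one neighbor is occupied by an agent of another type. -/
def exposed (G : SimpleGraph V) [DecidableRel G.Adj] (c : A → K) (σ : A ≃ V) (i : A) : Prop :=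
  ((G.neighborFinset (σ i)).filter (fun w => c (σ.symm w) ≠ c i)).Nonempty

instance exposed.instDecidable (G : SimpleGraph V) [DecidableRel G.Adj] (c : A → K)
    (σ : A ≃ V) : DecidablePred (exposed G c σ) :=
  fun _ => inferInstanceAs (Decidable (Finset.Nonempty _))

/-- The degree of integration of an assignment: the number of exposed agents. -/
def DI [Fintype A] (G : SimpleGraph V) [DecidableRel G.Adj] (c : A → K) (σ : A ≃ V) : ℕ :=
  (univ.filter (fun i : A => exposed G c σ i)).card

end SwapGame

namespace SwapGame

/-- The topology: a root `α` with `k` children `β₁, …, β_k`, each of which has `x − 1`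
leaf children of its own. -/
inductive VT (k x : ℕ) where
  | root : VT k x
  | mid : Fin k → VT k x
  | leaf : Fin k → Fin (x - 1) → VT k x
  deriving DecidableEq, Fintype

def adjVT {k x : ℕ} : VT k x → VT k x → Bool
  | .root, .mid _ => true
  | .mid i, .leaf j _ => i == j
  | _, _ => false

abbrev GVT (k x : ℕ) : SimpleGraph (VT k x) := mkGraph (@adjVT k x)

/-- Agents: `x + 1` agents of type `0` and `x` agents of each other type
(`n = kx + 1`); the type of an agent is its first component. -/
abbrev AT (k x : ℕ) := Σ t : Fin k, Fin (if (t : ℕ) = 0 then x + 1 else x)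

/-! ### Auxiliary lemmas -/

section Aux

variable {A V K : Type*} [Fintype V] [DecidableEq A] [DecidableEq V] [DecidableEq K]
variable (G : SimpleGraph V) [DecidableRel G.Adj] (c : A → K) (σ : A ≃ V)

lemma util_nonneg (i : A) : 0 ≤ util G c σ i := by
  unfold util; positivity

lemma util_le_one (i : A) : util G c σ i ≤ 1 := by
  unfold util
  apply div_le_one_of_le₀
  · exact_mod_cast Finset.card_le_card (Finset.filter_subset _ _)
  · positivity

lemma util_eq_one (i : A) (hne : (G.neighborFinset (σ i)).Nonempty)
    (h : ∀ w ∈ G.neighborFinset (σ i), c (σ.symm w) = c i) : util G c σ i = 1 := by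
  unfold util
  rw [Finset.filter_true_of_mem h, div_self]
  exact_mod_cast Finset.card_ne_zero.mpr hne

lemma util_eq_zero (i : A) (h : ∀ w ∈ G.neighborFinset (σ i), c (σ.symm w) ≠ c i) :
    util G c σ i = 0 := by
  unfold util
  rw [Finset.filter_false_of_mem h]
  simp

lemma swapA_apply_left (i j : A) : swapA σ i j i = σ j := by simp [swapA]

lemma swapA_symm_apply (i j : A) (w : V) :
    (swapA σ i j).symm w = Equiv.swap i j (σ.symm w) := by
  simp [swapA]

lemma swapA_comm (i j : A) : swapA σ i j = swapA σ j i := by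
  unfold swapA; rw [Equiv.swap_comm]

lemma util_swap_same (i j : A) (h : c i = c j) :
    util G c (swapA σ i j) i = util G c σ j := by
  unfold util
  rw [swapA_apply_left]
  congr 2
  apply congrArg
  apply Finset.filter_congr
  intro w _
  simp only [swapA_symm_apply]
  by_cases hai : σ.symm w = i
  · simp [hai, h]
  · by_cases haj : σ.symm w = j
    · simp [haj, h]
    · rw [Equiv.swap_apply_of_ne_of_ne hai haj, h]

lemma not_improving_same (i j : A) (h : c i = c j) : ¬ improving G c σ i j := by
  rintro ⟨h1, h2⟩
  rw [util_swap_same G c σ i j h] at h1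
  rw [swapA_comm, util_swap_same G c σ j i h.symm] at h2
  exact absurd h2 (not_lt.2 h1.le)

lemma post_util_zero (i j : A)
    (h : ∀ w ∈ G.neighborFinset (σ j), c (Equiv.swap i j (σ.symm w)) ≠ c i) :
    util G c (swapA σ i j) i = 0 := by
  apply util_eq_zero
  intro w hw
  rw [swapA_apply_left] at hw
  rw [swapA_symm_apply]
  exact h w hw

lemma crossing {W : Type*} (G : SimpleGraph W) {S : Set W} {a b : W} (w : G.Walk a b) :
    a ∈ S → b ∉ S → ∃ p q, G.Adj p q ∧ p ∈ S ∧ q ∉ S := by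
  induction w with
  | nil => intro ha hb; exact absurd ha hb
  | @cons a c b h w ih =>
      intro ha hb
      by_cases hc : c ∈ S
      · exact ih hc hb
      · exact ⟨a, c, h, ha, hc⟩

variable {k : ℕ}

lemma exists_exposed [Fintype A] (c : A → Fin k)
    (hG : G.Connected) (hall : ∀ t : Fin k, ∃ i, c i = t) (hk : 2 ≤ k)
    (t : Fin k) : ∃ a, c a = t ∧ exposed G c σ a := by
  obtain ⟨i, hi⟩ := hall t
  have : Nontrivial (Fin k) := Fin.nontrivial_iff_two_le.mpr hk
  obtain ⟨t', ht'⟩ := exists_ne t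
  obtain ⟨i', hi'⟩ := hall t'
  set S : Set V := {v | c (σ.symm v) = t} with hS
  have ha : σ i ∈ S := by simp [hS, hi]
  have hb : σ i' ∉ S := by simp [hS, hi', ht']
  obtain ⟨w⟩ := hG.preconnected (σ i) (σ i')
  obtain ⟨p, q, hpq, hp, hq⟩ := crossing G (S := S) w ha hb
  refine ⟨σ.symm p, hp, ⟨q, ?_⟩⟩
  rw [Finset.mem_filter, SimpleGraph.mem_neighborFinset, Equiv.apply_symm_apply]
  refine ⟨hpq, ?_⟩
  have : c (σ.symm p) = t := hp
  rw [this]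
  simpa [S] using hq

lemma k_le_DI [Fintype A] (c : A → Fin k)
    (hG : G.Connected) (hall : ∀ t : Fin k, ∃ i, c i = t) (hk : 2 ≤ k) :
    k ≤ DI G c σ := by
  have h := exists_exposed G σ c hG hall hk
  have : (univ : Finset (Fin k)).card ≤ (univ.filter (fun i : A => exposed G c σ i)).card := by
    apply Finset.card_le_card_of_surjOn c
    intro t _
    obtain ⟨a, hc, he⟩ := h t
    exact ⟨a, by simp [he], hc⟩
  simpa [DI] using this

end Aux

/-! ### The explicit game -/

def eVT (k x : ℕ) : VT k x ≃ (Unit ⊕ Fin k ⊕ Fin k × Fin (x-1)) where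
  toFun v := match v with
    | .root => Sum.inl ()
    | .mid i => Sum.inr (Sum.inl i)
    | .leaf i j => Sum.inr (Sum.inr (i, j))
  invFun s := match s with
    | Sum.inl _ => .root
    | Sum.inr (Sum.inl i) => .mid i
    | Sum.inr (Sum.inr (i, j)) => .leaf i j
  left_inv v := by cases v <;> rfl
  right_inv s := by rcases s with _ | (_ | ⟨_, _⟩) <;> rfl

lemma card_VT (k x : ℕ) (hx : 1 ≤ x) : Fintype.card (VT k x) = k * x + 1 := by
  rw [Fintype.card_congr (eVT k x)]
  simp only [Fintype.card_sum, Fintype.card_unit, Fintype.card_prod, Fintype.card_fin]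
  have h1 : x = (x - 1) + 1 := by omega
  have : k * x = k * (x-1) + k := by conv_lhs => rw [h1, Nat.mul_add, Nat.mul_one]
  omega

lemma card_AT (k x : ℕ) (hk : 1 ≤ k) : Fintype.card (AT k x) = k * x + 1 := by
  have : NeZero k := ⟨by omega⟩
  rw [Fintype.card_sigma]
  have : ∀ t : Fin k, Fintype.card (Fin (if (t : ℕ) = 0 then x + 1 else x))
      = x + (if t = 0 then 1 else 0) := by
    intro t
    rcases eq_or_ne t 0 with h | h
    · simp [h]
    · have : (t:ℕ) ≠ 0 := by
        exact fun h' => h (Fin.ext (by simp [h']))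
      simp [this, h]
  rw [Finset.sum_congr rfl (fun t _ => this t)]
  rw [Finset.sum_add_distrib, Finset.sum_ite_eq' univ (0 : Fin k)]
  simp [mul_comm]

variable {k x : ℕ}

lemma mem_nbr_root (w : VT k x) :
    w ∈ (GVT k x).neighborFinset .root ↔ ∃ i, w = .mid i := by
  rw [SimpleGraph.mem_neighborFinset]
  cases w with
  | root => simp [mkGraph, adjVT]
  | mid a => simp [mkGraph, adjVT]
  | leaf a b => simp [mkGraph, adjVT]

lemma mem_nbr_mid (i : Fin k) (w : VT k x) :
    w ∈ (GVT k x).neighborFinset (.mid i) ↔ w = .root ∨ ∃ l, w = .leaf i l := by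
  rw [SimpleGraph.mem_neighborFinset]
  cases w with
  | root => simp [mkGraph, adjVT]
  | mid a => simp [mkGraph, adjVT]
  | leaf a b => simpa [mkGraph, adjVT] using eq_comm

lemma mem_nbr_leaf (i : Fin k) (l : Fin (x-1)) (w : VT k x) :
    w ∈ (GVT k x).neighborFinset (.leaf i l) ↔ w = .mid i := by
  rw [SimpleGraph.mem_neighborFinset]
  cases w with
  | root => simp [mkGraph, adjVT]
  | mid a => simpa [mkGraph, adjVT] using eq_comm
  | leaf a b => simp [mkGraph, adjVT]

/-- successor cyclically -/
def nxt {k : ℕ} (i : Fin k) : Fin k := ⟨(i.val + 1) % k, Nat.mod_lt _ i.pos⟩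

lemma nxt_val {k : ℕ} (i : Fin k) : (nxt i).val = if i.val + 1 = k then 0 else i.val + 1 := by
  have hi := i.isLt
  unfold nxt
  by_cases h : i.val + 1 = k
  · rw [if_pos h]
    show (i.val + 1) % k = 0
    rw [h, Nat.mod_self]
  · rw [if_neg h]
    exact Nat.mod_eq_of_lt (by omega)

lemma nxt_inj {k : ℕ} {i j : Fin k} (h : nxt i = nxt j) : i = j := by
  have h' := congrArg Fin.val h
  rw [nxt_val, nxt_val] at h'
  have hi := i.isLt
  have hj := j.isLt
  apply Fin.ext
  split at h' <;> split at h' <;> omega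

lemma nxt_ne {k : ℕ} (hk : 2 ≤ k) (i : Fin k) : nxt i ≠ i := by
  intro h
  have h' := congrArg Fin.val h
  rw [nxt_val] at h'
  have hi := i.isLt
  split at h' <;> omega

def f3 (k x : ℕ) (hk : 2 ≤ k) (hx : 2 ≤ x) : VT k x → AT k x
  | .root => ⟨⟨0, by omega⟩, ⟨x, by simp⟩⟩
  | .mid i => ⟨i, ⟨0, by split <;> omega⟩⟩
  | .leaf i j => ⟨i, ⟨j + 1, by have := j.isLt; split <;> omega⟩⟩

lemma f3_inj (k x : ℕ) (hk : 2 ≤ k) (hx : 2 ≤ x) : Function.Injective (f3 k x hk hx) := by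
  intro v w h
  have h1 := congrArg Sigma.fst h
  have h2 := congrArg (fun a : AT k x => (a.2 : ℕ)) h
  cases v <;> cases w <;>
    simp only [f3] at h1 h2 <;> first
      | rfl
      | (exfalso; omega)
      | (congr 1 <;> first | exact h1 | (exact Fin.ext (by omega)))

def f2 (k x : ℕ) (hk : 2 ≤ k) (hx : 2 ≤ x) : VT k x → AT k x
  | .root => ⟨⟨0, by omega⟩, ⟨x, by simp⟩⟩
  | .mid i => ⟨nxt i, ⟨0, by split <;> omega⟩⟩
  | .leaf i j => ⟨i, ⟨j + 1, by have := j.isLt; split <;> omega⟩⟩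

lemma f2_inj (k x : ℕ) (hk : 2 ≤ k) (hx : 2 ≤ x) : Function.Injective (f2 k x hk hx) := by
  intro v w h
  have h1 := congrArg Sigma.fst h
  have h2 := congrArg (fun a : AT k x => (a.2 : ℕ)) h
  cases v <;> cases w <;> simp only [f2] at h1 h2
  · rfl
  · exfalso; omega
  · exfalso
    have := (‹Fin (x-1)›).isLt
    omega
  · exfalso; omega
  · rw [nxt_inj h1]
  · exfalso; omega
  · exfalso
    have := (‹Fin (x-1)›).isLt
    omega
  · exfalso; omega
  · congr 1 <;> first | exact h1 | exact Fin.ext (by omega)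


/-- in every `k`-swap game with only strategic agents, `k ≥ 2` nonempty
types and a connected topology, every assignment has degree of integration at least `k`;
consequently the integration price of anarchy is at most `n/k`. This bound is tight:
in the `k`-swap game with `x+1` agents of type `0` and `x` agents of each other type on
the tree with root `α`, `k` children, and `x−1` leaves per child, some assignment
exposes all `n = kx+1` agents, while some equilibrium assignment has degree of
integration exactly `k`. -/
theorem integration_poa (k x : ℕ) (hk : 2 ≤ k) (hx : 2 ≤ x) :
    (∀ (A V : Type) [Fintype A] [DecidableEq A] [Fintype V] [DecidableEq V]
        (G : SimpleGraph V) [inst : DecidableRel G.Adj] (c : A → Fin k) (σ : A ≃ V),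
        G.Connected → (∀ t : Fin k, ∃ i, c i = t) →
        k ≤ DI G c σ ∧
        (isEquilibrium G c σ →
          ∀ σ' : A ≃ V, (DI G c σ' : ℚ) ≤ (Fintype.card A : ℚ) / (k : ℚ) * DI G c σ)) ∧
    (∃ σ : AT k x ≃ VT k x, DI (GVT k x) Sigma.fst σ = k * x + 1) ∧
    (∃ σ : AT k x ≃ VT k x, isEquilibrium (GVT k x) Sigma.fst σ ∧
        DI (GVT k x) Sigma.fst σ = k) := by
  refine ⟨?_, ?_, ?_⟩
  · -- Part 1
    intro A V _ _ _ _ G instG c σ hconn hall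
    have hDIk : k ≤ DI G c σ := k_le_DI G σ c hconn hall hk
    refine ⟨hDIk, ?_⟩
    intro _ σ'
    have h1 : (DI G c σ' : ℚ) ≤ (Fintype.card A : ℚ) := by
      have : DI G c σ' ≤ Fintype.card A := by
        rw [← Finset.card_univ]
        exact Finset.card_filter_le _ _
      exact_mod_cast this
    have h2 : (k : ℚ) ≤ (DI G c σ : ℚ) := by exact_mod_cast hDIk
    have hk0 : (k : ℚ) ≠ 0 := by positivity
    have hAnn : (0:ℚ) ≤ (Fintype.card A : ℚ) / (k : ℚ) := by positivity
    calc (DI G c σ' : ℚ) ≤ (Fintype.card A : ℚ) := h1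
      _ = (Fintype.card A : ℚ) / (k : ℚ) * (k : ℚ) := by field_simp
      _ ≤ (Fintype.card A : ℚ) / (k : ℚ) * (DI G c σ : ℚ) :=
          mul_le_mul_of_nonneg_left h2 hAnn
  · -- Part 2 : a fully integrated assignment
    have hcard : Fintype.card (VT k x) = Fintype.card (AT k x) := by
      rw [card_VT k x (by omega), card_AT k x (by omega)]
    have hbij : Function.Bijective (f2 k x hk hx) :=
      (Fintype.bijective_iff_injective_and_card _).2 ⟨f2_inj k x hk hx, hcard⟩
    refine ⟨(Equiv.ofBijective (f2 k x hk hx) hbij).symm, ?_⟩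
    set σ := (Equiv.ofBijective (f2 k x hk hx) hbij).symm with hσ
    have hsymm : ∀ w, σ.symm w = f2 k x hk hx w := fun _ => rfl
    have hexp : ∀ a : AT k x, exposed (GVT k x) Sigma.fst σ a := by
      intro a
      obtain ⟨v, hv⟩ : ∃ v, σ a = v := ⟨_, rfl⟩
      have hfa : f2 k x hk hx v = a := by rw [← hv]; exact σ.symm_apply_apply a
      unfold exposed
      rw [hv]
      cases v with
      | root =>
          refine ⟨.mid ⟨0, by omega⟩, ?_⟩
          rw [Finset.mem_filter, mem_nbr_root]
          refine ⟨⟨_, rfl⟩, ?_⟩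
          rw [hsymm, ← hfa]
          exact nxt_ne hk _
      | mid t =>
          refine ⟨.leaf t ⟨0, by omega⟩, ?_⟩
          rw [Finset.mem_filter, mem_nbr_mid]
          refine ⟨Or.inr ⟨_, rfl⟩, ?_⟩
          rw [hsymm, ← hfa]
          exact fun h => nxt_ne hk t h.symm
      | leaf t l =>
          refine ⟨.mid t, ?_⟩
          rw [Finset.mem_filter, mem_nbr_leaf]
          refine ⟨rfl, ?_⟩
          rw [hsymm, ← hfa]
          exact nxt_ne hk t
    rw [DI, Finset.filter_true_of_mem (fun a _ => hexp a), Finset.card_univ,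
      card_AT k x (by omega)]
  · -- Part 3 : a segregated equilibrium
    have hcard : Fintype.card (VT k x) = Fintype.card (AT k x) := by
      rw [card_VT k x (by omega), card_AT k x (by omega)]
    have hbij : Function.Bijective (f3 k x hk hx) :=
      (Fintype.bijective_iff_injective_and_card _).2 ⟨f3_inj k x hk hx, hcard⟩
    refine ⟨(Equiv.ofBijective (f3 k x hk hx) hbij).symm, ?_, ?_⟩
    · -- equilibrium
      set G := GVT k x
      set c := (Sigma.fst : AT k x → Fin k)
      set σ := (Equiv.ofBijective (f3 k x hk hx) hbij).symm with hσ
      have hsymm : ∀ w, σ.symm w = f3 k x hk hx w := fun _ => rfl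
      rintro ⟨i, j, himp⟩
      by_cases hcc : c i = c j
      · exact not_improving_same G c σ i j hcc himp
      obtain ⟨v, hv⟩ : ∃ v, σ i = v := ⟨_, rfl⟩
      obtain ⟨u, hu⟩ : ∃ u, σ j = u := ⟨_, rfl⟩
      have hi : f3 k x hk hx v = i := by rw [← hv]; exact σ.symm_apply_apply i
      have hj : f3 k x hk hx u = j := by rw [← hu]; exact σ.symm_apply_apply j
      have hcol : (f3 k x hk hx v).1 ≠ (f3 k x hk hx u).1 := by rw [hi, hj]; exact hcc
      have hvu : v ≠ u := fun h => hcol (by rw [h])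
      have hA1 : util G c σ i = 1 → False := fun h1 =>
        absurd himp.1 (by rw [h1]; exact not_lt.2 (util_le_one G c (swapA σ i j) i))
      have hA0 : util G c (swapA σ i j) i = 0 → False := fun h0 =>
        absurd himp.1 (by rw [h0]; exact not_lt.2 (util_nonneg G c σ i))
      have hB0 : util G c (swapA σ i j) j = 0 → False := fun h0 =>
        absurd himp.2 (by rw [h0]; exact not_lt.2 (util_nonneg G c σ j))
      -- an agent on a leaf has utility one
      have hleafutil : ∀ (a : AT k x) (t : Fin k) (l : Fin (x-1)),
          σ a = .leaf t l → util G c σ a = 1 := by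
        intro a t l ha
        have hfa : f3 k x hk hx (VT.leaf t l) = a := by
          rw [← ha]; exact σ.symm_apply_apply a
        apply util_eq_one
        · rw [ha]; exact ⟨.mid t, (mem_nbr_leaf t l _).2 rfl⟩
        · intro y hy
          rw [ha] at hy
          rw [(mem_nbr_leaf t l y).1 hy, hsymm, ← hfa]
          rfl
      -- the agent on the central mid node has utility one
      have hmid0util : ∀ (a : AT k x),
          σ a = .mid ⟨0, by omega⟩ → util G c σ a = 1 := by
        intro a ha
        have hfa : f3 k x hk hx (VT.mid ⟨0, by omega⟩) = a := by
          rw [← ha]; exact σ.symm_apply_apply a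
        apply util_eq_one
        · rw [ha]; exact ⟨.root, (mem_nbr_mid _ _).2 (Or.inl rfl)⟩
        · intro y hy
          rw [ha] at hy
          rcases (mem_nbr_mid _ y).1 hy with rfl | ⟨l, rfl⟩ <;>
            (rw [hsymm, ← hfa]; rfl)
      -- swapping into a hostile neighborhood gives utility zero
      have hzero : ∀ (p q : AT k x) (vp vq : VT k x), σ p = vp → σ q = vq →
          (∀ y ∈ (GVT k x).neighborFinset vq, y ≠ vp →
            (f3 k x hk hx y).1 ≠ (f3 k x hk hx vp).1) →
          (f3 k x hk hx vq).1 ≠ (f3 k x hk hx vp).1 →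
          util G c (swapA σ p q) p = 0 := by
        intro p q vp vq hp hq hnb hcq
        have hfp : f3 k x hk hx vp = p := by rw [← hp]; exact σ.symm_apply_apply p
        have hfq : f3 k x hk hx vq = q := by rw [← hq]; exact σ.symm_apply_apply q
        apply post_util_zero
        intro w hw
        rw [hq] at hw
        have hcp : c p = (f3 k x hk hx vp).1 := by rw [← hfp]
        rw [hcp]
        by_cases hwv : w = vp
        · subst hwv
          have hsp : σ.symm w = p := by rw [hsymm, hfp]
          rw [hsp, Equiv.swap_apply_left, ← hfq]
          exact hcq
        · have hadj := (SimpleGraph.mem_neighborFinset _ _ _).1 hw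
          have hwq : w ≠ vq := hadj.ne'
          have h1 : σ.symm w ≠ p := by
            rw [hsymm, ← hfp]
            exact fun h => hwv (f3_inj k x hk hx h)
          have h2 : σ.symm w ≠ q := by
            rw [hsymm, ← hfq]
            exact fun h => hwq (f3_inj k x hk hx h)
          rw [Equiv.swap_apply_of_ne_of_ne h1 h2, hsymm]
          exact hnb w hw hwv
      cases v with
      | leaf t l => exact hA1 (hleafutil i t l hv)
      | root =>
          cases u with
          | root => exact hvu rfl
          | mid s =>
              apply hA0
              refine hzero i j VT.root (VT.mid s) hv hu ?_ (fun h => hcol h.symm)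
              intro y hy hyv
              rcases (mem_nbr_mid s y).1 hy with rfl | ⟨l2, rfl⟩
              · exact absurd rfl hyv
              · exact fun h => hcol h.symm
          | leaf s m =>
              apply hA0
              refine hzero i j VT.root (VT.leaf s m) hv hu ?_ (fun h => hcol h.symm)
              intro y hy _
              rw [(mem_nbr_leaf s m y).1 hy]
              exact fun h => hcol h.symm
      | mid t =>
          by_cases htz : t = (⟨0, by omega⟩ : Fin k)
          · subst htz
            exact hA1 (hmid0util i hv)
          cases u with
          | root =>
              apply hB0
              rw [swapA_comm]
              refine hzero j i VT.root (VT.mid t) hu hv ?_ hcol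
              intro y hy hyv
              rcases (mem_nbr_mid t y).1 hy with rfl | ⟨l2, rfl⟩
              · exact absurd rfl hyv
              · exact fun h => hcol h
          | mid s =>
              apply hA0
              refine hzero i j (VT.mid t) (VT.mid s) hv hu ?_ hcol.symm
              intro y hy hyv
              rcases (mem_nbr_mid s y).1 hy with rfl | ⟨l2, rfl⟩
              · exact fun h => htz h.symm
              · exact fun h => hcol h.symm
          | leaf s m =>
              apply hA0
              refine hzero i j (VT.mid t) (VT.leaf s m) hv hu ?_ hcol.symm
              intro y hy _
              rw [(mem_nbr_leaf s m y).1 hy]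
              exact fun h => hcol h.symm
    · -- degree of integration k
      set σ := (Equiv.ofBijective (f3 k x hk hx) hbij).symm with hσ
      have hsymm : ∀ w, σ.symm w = f3 k x hk hx w := fun _ => rfl
      rw [DI]
      have hcnt : (univ.filter (fun a : AT k x =>
          exposed (GVT k x) Sigma.fst σ a)).card =
          (univ.filter (fun v : VT k x =>
            v = VT.root ∨ ∃ s : Fin k, s ≠ ⟨0, by omega⟩ ∧ VT.mid s = v)).card := by
        apply Finset.card_equiv σ
        intro a
        simp only [Finset.mem_filter, Finset.mem_univ, true_and]
        obtain ⟨v, hv⟩ : ∃ v, σ a = v := ⟨_, rfl⟩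
        have hfa : f3 k x hk hx v = a := by rw [← hv]; exact σ.symm_apply_apply a
        rw [hv]
        unfold exposed
        rw [hv]
        cases v with
        | root =>
            simp only [true_or, iff_true]
            refine ⟨.mid ⟨1, by omega⟩, ?_⟩
            rw [Finset.mem_filter, mem_nbr_root]
            refine ⟨⟨_, rfl⟩, ?_⟩
            rw [hsymm, ← hfa]
            simp [f3, Fin.ext_iff]
        | mid t =>
            constructor
            · rintro ⟨y, hy⟩
              rw [Finset.mem_filter] at hy
              obtain ⟨hy1, hy2⟩ := hy
              rcases (mem_nbr_mid t y).1 hy1 with rfl | ⟨l2, rfl⟩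
              · rw [hsymm, ← hfa] at hy2
                refine Or.inr ⟨t, ?_, rfl⟩
                intro h
                apply hy2
                rw [h]
                rfl
              · rw [hsymm, ← hfa] at hy2
                exact absurd rfl hy2
            · rintro (h | ⟨s, hs, hmid⟩)
              · exact absurd h (by simp)
              obtain rfl : s = t := by simpa using hmid
              refine ⟨.root, ?_⟩
              rw [Finset.mem_filter, mem_nbr_mid]
              refine ⟨Or.inl rfl, ?_⟩
              rw [hsymm, ← hfa]
              exact fun h => hs h.symm
        | leaf t l =>
            constructor
            · rintro ⟨y, hy⟩
              rw [Finset.mem_filter] at hy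
              obtain ⟨hy1, hy2⟩ := hy
              rw [(mem_nbr_leaf t l y).1 hy1, hsymm, ← hfa] at hy2
              exact absurd rfl hy2
            · rintro (h | ⟨s, hs, hmid⟩)
              · exact absurd h (by simp)
              · exact absurd hmid (by simp)
      rw [hcnt]
      have hset : (univ.filter (fun v : VT k x =>
            v = VT.root ∨ ∃ s : Fin k, s ≠ ⟨0, by omega⟩ ∧ VT.mid s = v)) =
          insert VT.root
            ((univ.filter (fun s : Fin k => s ≠ ⟨0, by omega⟩)).image VT.mid) := by
        ext w
        constructor
        · intro hw
          rw [Finset.mem_filter] at hw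
          rcases hw.2 with h | ⟨s, hs, hmid⟩
          · rw [h]; exact Finset.mem_insert_self _ _
          · exact Finset.mem_insert_of_mem
              (Finset.mem_image.2 ⟨s, Finset.mem_filter.2 ⟨Finset.mem_univ _, hs⟩, hmid⟩)
        · intro hw
          rw [Finset.mem_filter]
          refine ⟨Finset.mem_univ _, ?_⟩
          rcases Finset.mem_insert.1 hw with h | h
          · exact Or.inl h
          · obtain ⟨s, hs, hmid⟩ := Finset.mem_image.1 h
            exact Or.inr ⟨s, (Finset.mem_filter.1 hs).2, hmid⟩
      rw [hset, Finset.card_insert_of_notMem (by simp),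
        Finset.card_image_of_injective _ (fun a b h => by injection h),
        Finset.filter_ne', Finset.card_erase_of_mem (Finset.mem_univ _),
        Finset.card_univ, Fintype.card_fin]
      omega

end SwapGame
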